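/- Equip ℕ with the topology in which a set is open if and only if it is downward closed, and let E = {n ∈ ℕ : n is even} and O = {n ∈ ℕ : n is odd}. Then the smallest family of subsets of ℕ containing both E and O and closed under topological closure and binary intersection is infinite. Consequently, there is a topological space and two subsets from which the operations closure and intersection alone generate infinitely many distinct sets. -/
import Mathlib


/-- The topology on `ℕ` in which a set is open if and only if it is downward closed
(the lower Alexandrov topology of the usual order). -/
def lowerTopology : TopologicalSpace ℕ where
  IsOpen U := ∀ ⦃m n : ℕ⦄, n ∈ U → m ≤ n → m ∈ U
  isOpen_univ := fun _ _ _ _ => trivial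
  isOpen_inter := fun _ _ hs ht _ _ hn hmn => ⟨hs hn.1 hmn, ht hn.2 hmn⟩
  isOpen_sUnion := fun _ hS _ _ hn hmn => by
    obtain ⟨s, hsS, hns⟩ := hn
    exact ⟨s, hsS, hS s hsS hns hmn⟩

/-- The family of subsets of `ℕ` generated from the evens `E` and the odds `O` by successive
applications of closure (in the lower topology) and binary intersection: the smallest
collection of subsets of `ℕ` containing `E` and `O` and closed under these operations. -/
inductive kwGenEvenOdd : Set ℕ → Prop
  | baseE : kwGenEvenOdd {n : ℕ | Even n}
  | baseO : kwGenEvenOdd {n : ℕ | Odd n}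
  | closure {A : Set ℕ} : kwGenEvenOdd A → kwGenEvenOdd (@closure ℕ lowerTopology A)
  | inter {A B : Set ℕ} : kwGenEvenOdd A → kwGenEvenOdd B → kwGenEvenOdd (A ∩ B)

/-- The smallest family of subsets of `ℕ` (with the lower topology) containing the evens and
the odds and closed under closure and binary intersection is infinite: closure and
intersection alone can generate infinitely many distinct sets from two sets. -/
lemma kwLowerClosure_eq (A : Set ℕ) :
    @closure ℕ lowerTopology A = {m | ∃ a ∈ A, a ≤ m} := by
  letI : TopologicalSpace ℕ := lowerTopology
  apply Set.Subset.antisymm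
  · apply closure_minimal
    · exact fun a ha => ⟨a, ha, le_refl a⟩
    · constructor
      intro m n hn hmn ⟨a, ha, ham⟩
      exact hn ⟨a, ha, ham.trans hmn⟩
  · rintro m ⟨a, ha, ham⟩
    have hC : IsClosed (closure A) := isClosed_closure
    have ha' : a ∈ closure A := subset_closure ha
    by_contra hm
    exact hC.isOpen_compl hm ham ha'

def kwS (n : ℕ) : Set ℕ := {m | n ≤ m ∧ m % 2 = n % 2}

lemma kwS_gen (n : ℕ) : kwGenEvenOdd (kwS n) := by
  induction n with
  | zero =>
    have : kwS 0 = {n : ℕ | Even n} := by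
      ext m
      simp [kwS, Nat.even_iff]
    rw [this]; exact kwGenEvenOdd.baseE
  | succ n ih =>
    have hpar : kwGenEvenOdd {m : ℕ | m % 2 = (n + 1) % 2} := by
      rcases Nat.even_or_odd (n + 1) with h | h
      · have : {m : ℕ | m % 2 = (n + 1) % 2} = {n : ℕ | Even n} := by
          ext m; simp [Nat.even_iff.mp h, Nat.even_iff]
        rw [this]; exact kwGenEvenOdd.baseE
      · have : {m : ℕ | m % 2 = (n + 1) % 2} = {n : ℕ | Odd n} := by
          ext m; simp [Nat.odd_iff.mp h, Nat.odd_iff]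
        rw [this]; exact kwGenEvenOdd.baseO
    have key : kwS (n + 1) = @closure ℕ lowerTopology (kwS n) ∩ {m : ℕ | m % 2 = (n + 1) % 2} := by
      rw [kwLowerClosure_eq]
      ext m
      constructor
      · rintro ⟨hle, hmod⟩
        exact ⟨⟨m-1, ⟨by omega, by omega⟩, by omega⟩, hmod⟩
      · rintro ⟨⟨a, ⟨hna, hamod⟩, ham⟩, hmod⟩
        refine ⟨?_, hmod⟩
        have : n ≤ m := hna.trans ham
        rcases this.lt_or_eq with h | h
        · exact h
        · exfalso; simp only [Set.mem_setOf_eq] at hmod; omega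
    rw [key]
    exact kwGenEvenOdd.inter (kwGenEvenOdd.closure ih) hpar

lemma kwS_injective : Function.Injective kwS := by
  intro a b hab
  have ha : a ∈ kwS a := ⟨le_refl a, rfl⟩
  have hb : b ∈ kwS b := ⟨le_refl b, rfl⟩
  rw [hab] at ha
  rw [← hab] at hb
  exact le_antisymm hb.1 ha.1

theorem kwGenEvenOdd_infinite : {A : Set ℕ | kwGenEvenOdd A}.Infinite :=
  Set.infinite_of_injective_forall_mem kwS_injective kwS_gen
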